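/- Let k be a positive integer and let m ≤ n be integers with n − m + 1 = 4k. Then the set of consecutive integers [m,n] can be partitioned into 2k pairs such that the set of pair sums is exactly the set of 2k−1 consecutive integers {m+n−k, m+n−k+1, ..., m+n+k−2} together with the single additional value m+n+2k−1. -/

import Mathlib

def pA (k j : ℕ) : ℕ :=
  if j = 2*k-1 then 2*k-1 else if j % 2 = 0 then j/2 else k + j/2

def pB (k j : ℕ) : ℕ :=
  if j = 2*k-1 then 4*k-1 else if j % 2 = 0 then 3*k-1 + j/2 else 2*k + j/2

def prPair (k : ℕ) (m : ℤ) (j : ℕ) : Finset ℤ := {m + (pA k j : ℤ), m + (pB k j : ℤ)}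

lemma pA_lt_pB (k j : ℕ) (hk : 0 < k) (hj : j < 2*k) : pA k j < pB k j := by
  unfold pA pB; split_ifs <;> omega

lemma pB_le (k j : ℕ) (hk : 0 < k) (hj : j < 2*k) : pB k j ≤ 4*k-1 := by
  unfold pB; split_ifs <;> omega

lemma p_distinct (k j j' : ℕ) (hk : 0 < k) (hj : j < 2*k) (hj' : j' < 2*k) (hne : j ≠ j') :
    pA k j ≠ pA k j' ∧ pA k j ≠ pB k j' ∧ pB k j ≠ pB k j' := by
  unfold pA pB; split_ifs <;> omega

lemma pAB_sum (k j : ℕ) (hk : 0 < k) (hj : j < 2*k) :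
    pA k j + pB k j = if j = 2*k-1 then 6*k-2 else 3*k-1+j := by
  unfold pA pB; split_ifs <;> omega

/-- For `m ≤ n` with `n - m + 1 = 4k` (`k ≥ 1`), the set `[m,n]` can be partitioned into
`2k` pairs such that the set of pair sums is exactly
`{m+n-k, ..., m+n+k-2} ∪ {m+n+2k-1}`. -/
theorem pair_sums_interval_4k_consecutive_with_jump (k : ℕ) (hk : 0 < k)
    (m n : ℤ) (hmn : m ≤ n) (hcard : n - m + 1 = 4 * (k : ℤ)) :
    ∃ P : Finset (Finset ℤ),
      P.card = 2 * k ∧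
      (∀ p ∈ P, p.card = 2) ∧
      (∀ p ∈ P, ∀ q ∈ P, p ≠ q → Disjoint p q) ∧
      P.biUnion id = Finset.Icc m n ∧
      P.image (fun p => p.sum id) =
        Finset.Icc (m + n - (k : ℤ)) (m + n + (k : ℤ) - 2) ∪ {m + n + 2 * (k : ℤ) - 1} := by
  have hn : n = m + 4 * (k : ℤ) - 1 := by omega
  refine ⟨(Finset.range (2*k)).image (prPair k m), ?_, ?_, ?_, ?_, ?_⟩
  -- disjointness of distinct pairs (used several times)
  all_goals
    have hdisj : ∀ j < 2*k, ∀ j' < 2*k, j ≠ j' → Disjoint (prPair k m j) (prPair k m j') := by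
      intro j hj j' hj' hne
      obtain ⟨h1, h2, h3⟩ := p_distinct k j j' hk hj hj' hne
      obtain ⟨h1', h2', h3'⟩ := p_distinct k j' j hk hj' hj (Ne.symm hne)
      simp only [prPair, Finset.disjoint_left, Finset.mem_insert, Finset.mem_singleton]
      rintro x (rfl | rfl) hx <;> rcases hx with h | h <;> omega
  all_goals
    have hinj : Set.InjOn (prPair k m) (Finset.range (2*k)) := by
      intro j hj j' hj' heq
      by_contra hne
      simp only [Finset.coe_range, Set.mem_Iio] at hj hj'
      have hd := hdisj j hj j' hj' hne
      rw [heq] at hd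
      have hmem : m + (pA k j' : ℤ) ∈ prPair k m j' := by
        simp [prPair]
      exact Finset.disjoint_left.mp hd hmem hmem
  all_goals
    have hsum : ∀ j < 2*k, (prPair k m j).sum id = 2*m + (pA k j : ℤ) + (pB k j : ℤ) := by
      intro j hj
      have h := pA_lt_pB k j hk hj
      rw [prPair, Finset.sum_pair (by intro hc; omega)]
      simp; ring
  · -- card
    rw [Finset.card_image_of_injOn hinj, Finset.card_range]
  · -- each pair has card 2
    intro p hp
    simp only [Finset.mem_image, Finset.mem_range] at hp
    obtain ⟨j, hj, rfl⟩ := hp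
    have h := pA_lt_pB k j hk hj
    rw [prPair, Finset.card_pair (by intro hc; omega)]
  · -- pairwise disjoint
    intro p hp q hq hpq
    simp only [Finset.mem_image, Finset.mem_range] at hp hq
    obtain ⟨j, hj, rfl⟩ := hp
    obtain ⟨j', hj', rfl⟩ := hq
    exact hdisj j hj j' hj' (fun h => hpq (by rw [h]))
  · -- biUnion = Icc
    have hsub : ((Finset.range (2*k)).image (prPair k m)).biUnion id ⊆ Finset.Icc m n := by
      intro x hx
      simp only [Finset.mem_biUnion, Finset.mem_image, Finset.mem_range, id] at hx
      obtain ⟨p, ⟨j, hj, rfl⟩, hxp⟩ := hx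
      have h1 := pA_lt_pB k j hk hj
      have h2 := pB_le k j hk hj
      simp only [prPair, Finset.mem_insert, Finset.mem_singleton] at hxp
      rw [Finset.mem_Icc]
      rcases hxp with rfl | rfl <;> omega
    refine Finset.eq_of_subset_of_card_le hsub ?_
    have hc1 : (((Finset.range (2*k)).image (prPair k m)).biUnion id).card = 4*k := by
      rw [Finset.card_biUnion]
      · have : ∀ p ∈ (Finset.range (2*k)).image (prPair k m), (id p).card = 2 := by
          intro p hp
          simp only [Finset.mem_image, Finset.mem_range] at hp
          obtain ⟨j, hj, rfl⟩ := hp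
          have h := pA_lt_pB k j hk hj
          rw [id, prPair, Finset.card_pair (by intro hc; omega)]
        rw [Finset.sum_congr rfl this, Finset.sum_const, smul_eq_mul,
          Finset.card_image_of_injOn hinj, Finset.card_range]
        ring
      · intro p hp q hq hpq
        simp only [Finset.mem_coe, Finset.mem_image, Finset.mem_range] at hp hq
        obtain ⟨j, hj, rfl⟩ := hp
        obtain ⟨j', hj', rfl⟩ := hq
        exact hdisj j hj j' hj' (fun h => hpq (by rw [h]))
    have hc2 : (Finset.Icc m n).card = 4*k := by
      rw [Int.card_Icc]
      omega
    omega
  · -- image of sums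
    rw [Finset.image_image]
    ext x
    simp only [Finset.mem_image, Finset.mem_range, Finset.mem_union, Finset.mem_Icc,
      Finset.mem_singleton, Function.comp]
    constructor
    · rintro ⟨j, hj, rfl⟩
      rw [hsum j hj]
      have key := pAB_sum k j hk hj
      by_cases hje : j = 2*k-1
      · rw [if_pos hje] at key
        omega
      · rw [if_neg hje] at key
        omega
    · intro hx
      rcases hx with ⟨h1, h2⟩ | h
      · refine ⟨(x - (2*m + 3*(k:ℤ) - 1)).toNat, by omega, ?_⟩
        rw [hsum _ (by omega)]
        have key := pAB_sum k (x - (2*m + 3*(k:ℤ) - 1)).toNat hk (by omega)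
        rw [if_neg (by omega)] at key
        omega
      · refine ⟨2*k-1, by omega, ?_⟩
        rw [hsum _ (by omega)]
        have key := pAB_sum k (2*k-1) hk (by omega)
        rw [if_pos rfl] at key
        omega
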